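/- The map Φ(a,b,c,d,e,f) = (a/(4ac-b²), -b/(4ac-b²), c/(4ac-b²), -d/(4df-e²), e/(4df-e²), -f/(4df-e²)) on the open set {4ac > b², 4df > e²} ⊂ ℝ⁶ has Jacobian determinant equal to -1/((4ac-b²)³(4df-e²)³), which is everywhere nonzero. -/

import Mathlib

noncomputable def Phi : (Fin 6 → ℝ) → (Fin 6 → ℝ) := fun p =>
  ![p 0 / (4 * p 0 * p 2 - p 1 ^ 2),
    -p 1 / (4 * p 0 * p 2 - p 1 ^ 2),
    p 2 / (4 * p 0 * p 2 - p 1 ^ 2),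
    -p 3 / (4 * p 3 * p 5 - p 4 ^ 2),
    p 4 / (4 * p 3 * p 5 - p 4 ^ 2),
    -p 5 / (4 * p 3 * p 5 - p 4 ^ 2)]


set_option maxHeartbeats 2000000 in
set_option maxRecDepth 10000 in
lemma det_block6 (x00 x01 x02 x10 x11 x12 x20 x21 x22
    y00 y01 y02 y10 y11 y12 y20 y21 y22 : ℝ) :
    Matrix.det !![x00,x01,x02,0,0,0; x10,x11,x12,0,0,0; x20,x21,x22,0,0,0;
      0,0,0,y00,y01,y02; 0,0,0,y10,y11,y12; 0,0,0,y20,y21,y22] =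
    (x00*(x11*x22 - x12*x21) - x01*(x10*x22 - x12*x20) + x02*(x10*x21 - x11*x20)) *
    (y00*(y11*y22 - y12*y21) - y01*(y10*y22 - y12*y20) + y02*(y10*y21 - y11*y20)) := by
  rw [Matrix.det_succ_row_zero]
  simp [Fin.sum_univ_succ, Matrix.det_succ_row_zero, Matrix.det_fin_three, Fin.succAbove]
  ring

set_option maxHeartbeats 3000000 in
theorem stmt_5 (a b c d e f : ℝ) (h1 : b ^ 2 < 4 * a * c) (h2 : e ^ 2 < 4 * d * f) :
    LinearMap.det ((fderiv ℝ Phi ![a, b, c, d, e, f]).toLinearMap) =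
        -1 / ((4 * a * c - b ^ 2) ^ 3 * (4 * d * f - e ^ 2) ^ 3) ∧
      LinearMap.det ((fderiv ℝ Phi ![a, b, c, d, e, f]).toLinearMap) ≠ 0 := by
  set p : Fin 6 → ℝ := ![a, b, c, d, e, f] with hp
  set u : ℝ := 4 * a * c - b ^ 2 with hu'
  set v : ℝ := 4 * d * f - e ^ 2 with hv'
  have hu : (0:ℝ) < u := by rw [hu']; linarith
  have hv : (0:ℝ) < v := by rw [hv']; linarith
  have hu0 : u ≠ 0 := ne_of_gt hu
  have hv0 : v ≠ 0 := ne_of_gt hv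
  set M : Matrix (Fin 6) (Fin 6) ℝ := Matrix.of
    ![![-b^2/u^2, 2*a*b/u^2, -4*a^2/u^2, 0, 0, 0],
      ![4*b*c/u^2, -(4*a*c+b^2)/u^2, 4*a*b/u^2, 0, 0, 0],
      ![-4*c^2/u^2, 2*b*c/u^2, -b^2/u^2, 0, 0, 0],
      ![0, 0, 0, e^2/v^2, -2*d*e/v^2, 4*d^2/v^2],
      ![0, 0, 0, -4*e*f/v^2, (4*d*f+e^2)/v^2, -4*d*e/v^2],
      ![0, 0, 0, 4*f^2/v^2, -2*e*f/v^2, e^2/v^2]] with hM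
  set L : (Fin 6 → ℝ) →L[ℝ] (Fin 6 → ℝ) :=
    LinearMap.toContinuousLinearMap (Matrix.toLin' M) with hL
  have hcoord : ∀ i : Fin 6, HasFDerivAt (fun x : Fin 6 → ℝ => x i)
      (ContinuousLinearMap.proj (R := ℝ) (φ := fun _ : Fin 6 => ℝ) i) p :=
    fun i => (ContinuousLinearMap.proj (R := ℝ) (φ := fun _ : Fin 6 => ℝ) i).hasFDerivAt
  have hp0 : p 0 = a := rfl
  have hp1 : p 1 = b := rfl
  have hp2 : p 2 = c := rfl
  have hp3 : p 3 = d := rfl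
  have hp4 : p 4 = e := rfl
  have hp5 : p 5 = f := rfl
  have hden1 := (((hcoord 0).const_mul (4:ℝ)).mul (hcoord 2)).sub ((hcoord 1).mul (hcoord 1))
  have hden2 := (((hcoord 3).const_mul (4:ℝ)).mul (hcoord 5)).sub ((hcoord 4).mul (hcoord 4))
  have hd1ne : 4 * p 0 * p 2 - p 1 * p 1 ≠ 0 := by
    rw [hp0, hp1, hp2, ← sq]; exact hu0
  have hd2ne : 4 * p 3 * p 5 - p 4 * p 4 ≠ 0 := by
    rw [hp3, hp4, hp5, ← sq]; exact hv0
  have hinv1 := (hasFDerivAt_inv hd1ne).comp p hden1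
  have hinv2 := (hasFDerivAt_inv hd2ne).comp p hden2
  have hF : HasFDerivAt Phi L p := by
    apply hasFDerivAt_pi''
    intro i
    fin_cases i
    · have h := (hcoord 0).mul hinv1
      convert h using 2 with x
      · rfl
      · simp [Phi, div_eq_mul_inv, sq, show (5:Fin 6) = Fin.succ 4 from rfl, Matrix.cons_val_succ]
      · refine ContinuousLinearMap.ext fun w => ?_
        simp only [ContinuousLinearMap.comp_apply, ContinuousLinearMap.proj_apply,
          ContinuousLinearMap.add_apply, ContinuousLinearMap.sub_apply,
          ContinuousLinearMap.smul_apply, ContinuousLinearMap.smulRight_apply,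
          ContinuousLinearMap.one_apply, LinearMap.coe_toContinuousLinearMap',
          Matrix.toLin'_apply, hM, Function.comp, smul_eq_mul, hL,
          Matrix.mulVec, dotProduct, ContinuousLinearMap.toSpanSingleton_apply, Fin.sum_univ_six, Matrix.of_apply,
          Matrix.cons_val', Matrix.cons_val_zero, Matrix.cons_val_one, Matrix.head_cons,
          Matrix.cons_val_two, Matrix.cons_val_three, Matrix.cons_val_four,
          show (5 : Fin 6) = Fin.succ 4 from rfl, Matrix.cons_val_succ,
          Matrix.vecTail, Matrix.vecHead, hp0, hp1, hp2, hp3, hp4, hp5,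
          show p (Fin.succ 4) = f from rfl, hu', hv', Fin.isValue,
          Fin.reduceFinMk, Pi.mul_apply, Pi.sub_apply, Pi.neg_apply, Pi.pow_apply,
          Function.comp_apply, ContinuousLinearMap.neg_apply]
        have hA : 4 * a * c - b ^ 2 ≠ 0 := by rw [hu'] at hu0; exact hu0
        have hB : 4 * a * c - b * b ≠ 0 := by rw [← sq]; exact hA
        have hA2 : 4 * d * f - e ^ 2 ≠ 0 := by rw [hv'] at hv0; exact hv0
        have hB2 : 4 * d * f - e * e ≠ 0 := by rw [← sq]; exact hA2
        field_simp [hA, hB, hA2, hB2]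
        ring
    · have h := (hcoord 1).neg.mul hinv1
      convert h using 2 with x
      · rfl
      · simp [Phi, div_eq_mul_inv, sq, show (5:Fin 6) = Fin.succ 4 from rfl, Matrix.cons_val_succ]
      · refine ContinuousLinearMap.ext fun w => ?_
        simp only [ContinuousLinearMap.comp_apply, ContinuousLinearMap.proj_apply,
          ContinuousLinearMap.add_apply, ContinuousLinearMap.sub_apply,
          ContinuousLinearMap.smul_apply, ContinuousLinearMap.smulRight_apply,
          ContinuousLinearMap.one_apply, LinearMap.coe_toContinuousLinearMap',
          Matrix.toLin'_apply, hM, Function.comp, smul_eq_mul, hL,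
          Matrix.mulVec, dotProduct, ContinuousLinearMap.toSpanSingleton_apply, Fin.sum_univ_six, Matrix.of_apply,
          Matrix.cons_val', Matrix.cons_val_zero, Matrix.cons_val_one, Matrix.head_cons,
          Matrix.cons_val_two, Matrix.cons_val_three, Matrix.cons_val_four,
          show (5 : Fin 6) = Fin.succ 4 from rfl, Matrix.cons_val_succ,
          Matrix.vecTail, Matrix.vecHead, hp0, hp1, hp2, hp3, hp4, hp5,
          show p (Fin.succ 4) = f from rfl, hu', hv', Fin.isValue,
          Fin.reduceFinMk, Pi.mul_apply, Pi.sub_apply, Pi.neg_apply, Pi.pow_apply,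
          Function.comp_apply, ContinuousLinearMap.neg_apply]
        have hA : 4 * a * c - b ^ 2 ≠ 0 := by rw [hu'] at hu0; exact hu0
        have hB : 4 * a * c - b * b ≠ 0 := by rw [← sq]; exact hA
        have hA2 : 4 * d * f - e ^ 2 ≠ 0 := by rw [hv'] at hv0; exact hv0
        have hB2 : 4 * d * f - e * e ≠ 0 := by rw [← sq]; exact hA2
        field_simp [hA, hB, hA2, hB2]
        ring
    · have h := (hcoord 2).mul hinv1
      convert h using 2 with x
      · rfl
      · simp [Phi, div_eq_mul_inv, sq, show (5:Fin 6) = Fin.succ 4 from rfl, Matrix.cons_val_succ]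
      · refine ContinuousLinearMap.ext fun w => ?_
        simp only [ContinuousLinearMap.comp_apply, ContinuousLinearMap.proj_apply,
          ContinuousLinearMap.add_apply, ContinuousLinearMap.sub_apply,
          ContinuousLinearMap.smul_apply, ContinuousLinearMap.smulRight_apply,
          ContinuousLinearMap.one_apply, LinearMap.coe_toContinuousLinearMap',
          Matrix.toLin'_apply, hM, Function.comp, smul_eq_mul, hL,
          Matrix.mulVec, dotProduct, ContinuousLinearMap.toSpanSingleton_apply, Fin.sum_univ_six, Matrix.of_apply,
          Matrix.cons_val', Matrix.cons_val_zero, Matrix.cons_val_one, Matrix.head_cons,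
          Matrix.cons_val_two, Matrix.cons_val_three, Matrix.cons_val_four,
          show (5 : Fin 6) = Fin.succ 4 from rfl, Matrix.cons_val_succ,
          Matrix.vecTail, Matrix.vecHead, hp0, hp1, hp2, hp3, hp4, hp5,
          show p (Fin.succ 4) = f from rfl, hu', hv', Fin.isValue,
          Fin.reduceFinMk, Pi.mul_apply, Pi.sub_apply, Pi.neg_apply, Pi.pow_apply,
          Function.comp_apply, ContinuousLinearMap.neg_apply]
        have hA : 4 * a * c - b ^ 2 ≠ 0 := by rw [hu'] at hu0; exact hu0
        have hB : 4 * a * c - b * b ≠ 0 := by rw [← sq]; exact hA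
        have hA2 : 4 * d * f - e ^ 2 ≠ 0 := by rw [hv'] at hv0; exact hv0
        have hB2 : 4 * d * f - e * e ≠ 0 := by rw [← sq]; exact hA2
        field_simp [hA, hB, hA2, hB2]
        ring
    · have h := (hcoord 3).neg.mul hinv2
      convert h using 2 with x
      · rfl
      · simp [Phi, div_eq_mul_inv, sq, show (5:Fin 6) = Fin.succ 4 from rfl, Matrix.cons_val_succ]
      · refine ContinuousLinearMap.ext fun w => ?_
        simp only [ContinuousLinearMap.comp_apply, ContinuousLinearMap.proj_apply,
          ContinuousLinearMap.add_apply, ContinuousLinearMap.sub_apply,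
          ContinuousLinearMap.smul_apply, ContinuousLinearMap.smulRight_apply,
          ContinuousLinearMap.one_apply, LinearMap.coe_toContinuousLinearMap',
          Matrix.toLin'_apply, hM, Function.comp, smul_eq_mul, hL,
          Matrix.mulVec, dotProduct, ContinuousLinearMap.toSpanSingleton_apply, Fin.sum_univ_six, Matrix.of_apply,
          Matrix.cons_val', Matrix.cons_val_zero, Matrix.cons_val_one, Matrix.head_cons,
          Matrix.cons_val_two, Matrix.cons_val_three, Matrix.cons_val_four,
          show (5 : Fin 6) = Fin.succ 4 from rfl, Matrix.cons_val_succ,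
          Matrix.vecTail, Matrix.vecHead, hp0, hp1, hp2, hp3, hp4, hp5,
          show p (Fin.succ 4) = f from rfl, hu', hv', Fin.isValue,
          Fin.reduceFinMk, Pi.mul_apply, Pi.sub_apply, Pi.neg_apply, Pi.pow_apply,
          Function.comp_apply, ContinuousLinearMap.neg_apply]
        have hA : 4 * a * c - b ^ 2 ≠ 0 := by rw [hu'] at hu0; exact hu0
        have hB : 4 * a * c - b * b ≠ 0 := by rw [← sq]; exact hA
        have hA2 : 4 * d * f - e ^ 2 ≠ 0 := by rw [hv'] at hv0; exact hv0
        have hB2 : 4 * d * f - e * e ≠ 0 := by rw [← sq]; exact hA2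
        field_simp [hA, hB, hA2, hB2]
        ring
    · have h := (hcoord 4).mul hinv2
      convert h using 2 with x
      · rfl
      · simp [Phi, div_eq_mul_inv, sq, show (5:Fin 6) = Fin.succ 4 from rfl, Matrix.cons_val_succ]
      · refine ContinuousLinearMap.ext fun w => ?_
        simp only [ContinuousLinearMap.comp_apply, ContinuousLinearMap.proj_apply,
          ContinuousLinearMap.add_apply, ContinuousLinearMap.sub_apply,
          ContinuousLinearMap.smul_apply, ContinuousLinearMap.smulRight_apply,
          ContinuousLinearMap.one_apply, LinearMap.coe_toContinuousLinearMap',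
          Matrix.toLin'_apply, hM, Function.comp, smul_eq_mul, hL,
          Matrix.mulVec, dotProduct, ContinuousLinearMap.toSpanSingleton_apply, Fin.sum_univ_six, Matrix.of_apply,
          Matrix.cons_val', Matrix.cons_val_zero, Matrix.cons_val_one, Matrix.head_cons,
          Matrix.cons_val_two, Matrix.cons_val_three, Matrix.cons_val_four,
          show (5 : Fin 6) = Fin.succ 4 from rfl, Matrix.cons_val_succ,
          Matrix.vecTail, Matrix.vecHead, hp0, hp1, hp2, hp3, hp4, hp5,
          show p (Fin.succ 4) = f from rfl, hu', hv', Fin.isValue,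
          Fin.reduceFinMk, Pi.mul_apply, Pi.sub_apply, Pi.neg_apply, Pi.pow_apply,
          Function.comp_apply, ContinuousLinearMap.neg_apply]
        have hA : 4 * a * c - b ^ 2 ≠ 0 := by rw [hu'] at hu0; exact hu0
        have hB : 4 * a * c - b * b ≠ 0 := by rw [← sq]; exact hA
        have hA2 : 4 * d * f - e ^ 2 ≠ 0 := by rw [hv'] at hv0; exact hv0
        have hB2 : 4 * d * f - e * e ≠ 0 := by rw [← sq]; exact hA2
        field_simp [hA, hB, hA2, hB2]
        ring
    · have h := (hcoord 5).neg.mul hinv2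
      convert h using 2 with x
      · rfl
      · simp [Phi, div_eq_mul_inv, sq, show (5:Fin 6) = Fin.succ 4 from rfl, Matrix.cons_val_succ]
      · refine ContinuousLinearMap.ext fun w => ?_
        simp only [ContinuousLinearMap.comp_apply, ContinuousLinearMap.proj_apply,
          ContinuousLinearMap.add_apply, ContinuousLinearMap.sub_apply,
          ContinuousLinearMap.smul_apply, ContinuousLinearMap.smulRight_apply,
          ContinuousLinearMap.one_apply, LinearMap.coe_toContinuousLinearMap',
          Matrix.toLin'_apply, hM, Function.comp, smul_eq_mul, hL,
          Matrix.mulVec, dotProduct, ContinuousLinearMap.toSpanSingleton_apply, Fin.sum_univ_six, Matrix.of_apply,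
          Matrix.cons_val', Matrix.cons_val_zero, Matrix.cons_val_one, Matrix.head_cons,
          Matrix.cons_val_two, Matrix.cons_val_three, Matrix.cons_val_four,
          show (5 : Fin 6) = Fin.succ 4 from rfl, Matrix.cons_val_succ,
          Matrix.vecTail, Matrix.vecHead, hp0, hp1, hp2, hp3, hp4, hp5,
          show p (Fin.succ 4) = f from rfl, hu', hv', Fin.isValue,
          Fin.reduceFinMk, Pi.mul_apply, Pi.sub_apply, Pi.neg_apply, Pi.pow_apply,
          Function.comp_apply, ContinuousLinearMap.neg_apply]
        have hA : 4 * a * c - b ^ 2 ≠ 0 := by rw [hu'] at hu0; exact hu0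
        have hB : 4 * a * c - b * b ≠ 0 := by rw [← sq]; exact hA
        have hA2 : 4 * d * f - e ^ 2 ≠ 0 := by rw [hv'] at hv0; exact hv0
        have hB2 : 4 * d * f - e * e ≠ 0 := by rw [← sq]; exact hA2
        field_simp [hA, hB, hA2, hB2]
        ring
  have hfd : fderiv ℝ Phi p = L := hF.fderiv
  have hdet : LinearMap.det ((fderiv ℝ Phi p).toLinearMap) = M.det := by
    rw [hfd, hL, LinearMap.coe_toContinuousLinearMap]
    exact LinearMap.det_toLin' M
  have hMdet : M.det = -1 / (u ^ 3 * v ^ 3) := by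
    have hA : 4 * a * c - b ^ 2 ≠ 0 := by rw [hu'] at hu0; exact hu0
    have hA2 : 4 * d * f - e ^ 2 ≠ 0 := by rw [hv'] at hv0; exact hv0
    rw [hM, det_block6]
    field_simp [hu', hv', hA, hA2]
    ring
  constructor
  · rw [hdet, hMdet, hu', hv']
  · rw [hdet, hMdet]
    positivity
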